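/- Let t ≠ {∅} be a full binary tree, and let u be the lexicographically maximal vertex of t with S_u(t) = S(t). Then u is an internal vertex of t (i.e., u1, u2 ∈ t), and S(t) = 2·min(S_{u1}(t), S_{u2}(t)) + 1[S_{u1}(t) > S_{u2}(t)] + 1. In particular, S(t) is even if and only if S_{u1}(t) > S_{u2}(t). -/

import Mathlib

/-- Words over the alphabet {1,2}, encoded as lists of booleans (`false` = 1, `true` = 2). -/
abbrev Word := List Bool

/-- Longest common prefix of two words (`u ∧ v`). -/
def lcp : Word → Word → Word
  | a :: as, b :: bs => if a = b then a :: lcp as bs else []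
  | _, _ => []

/-- The lexicographic (strict) order on words; a strict prefix is smaller. -/
def wlex (u v : Word) : Prop := List.Lex (· < ·) u v

/-- A binary tree: a finite, prefix-closed set of words containing the empty word. -/
def IsBinaryTree (t : Set Word) : Prop :=
  t.Finite ∧ ([] : Word) ∈ t ∧ ∀ u ∈ t, ∀ v : Word, v <+: u → v ∈ t

/-- Fullness: each vertex has either zero or two children. -/
def IsFull (t : Set Word) : Prop :=
  ∀ u ∈ t, (u ++ [false] ∈ t ↔ u ++ [true] ∈ t)

def IsFullBinaryTree (t : Set Word) : Prop := IsBinaryTree t ∧ IsFull t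

/-- `φ` is an embedding of `t` into `t'`: injective on `t`, strictly increasing for the
lexicographic order, and preserving longest common prefixes. -/
def IsEmbedding (t t' : Set Word) (φ : Word → Word) : Prop :=
  (∀ u ∈ t, φ u ∈ t') ∧
  (∀ u ∈ t, ∀ v ∈ t, u ≠ v → φ u ≠ φ v) ∧
  (∀ u ∈ t, ∀ v ∈ t, wlex u v → wlex (φ u) (φ v)) ∧
  (∀ u ∈ t, ∀ v ∈ t, φ (lcp u v) = lcp (φ u) (φ v))

/-- `t` can be embedded in `t'`. -/
def Embeds (t t' : Set Word) : Prop := ∃ φ, IsEmbedding t t' φ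

/-- `graft b t = b · t`, the copy of `t` rooted at the child `b` of the root. -/
def graft (b : Bool) (t : Set Word) : Set Word := (fun w => b :: w) '' t

/-- The interpolating trees: τ₀ = {∅}, τ₁ = {∅,1,2},
τ_{2m} = {∅} ∪ 1·τ_m ∪ 2·τ_{m-1}, τ_{2m+1} = {∅} ∪ 1·τ_m ∪ 2·τ_m (for m ≥ 1). -/
def tau : ℕ → Set Word
  | 0 => {[]}
  | 1 => {[], [false], [true]}
  | n + 2 => {[]} ∪ graft false (tau ((n + 2) / 2)) ∪ graft true (tau ((n + 1) / 2))
termination_by n => n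
decreasing_by all_goals omega

/-- The subtree of `t` rooted at `u`: θ_u t = {v : uv ∈ t}. -/
def subtreeAt (u : Word) (t : Set Word) : Set Word := {v | u ++ v ∈ t}

/-- The refined Horton–Strahler number S(t) = max {r : τ_r embeds in t}. -/
noncomputable def RHS (t : Set Word) : ℕ := sSup {r | Embeds (tau r) t}

/-- S_u(t) = S(θ_u t). -/
noncomputable def Sv (u : Word) (t : Set Word) : ℕ := RHS (subtreeAt u t)

/-- The set of internal vertices of `t` (those having a child in `t`). -/
def internals (t : Set Word) : Set Word :=
  {u | u ∈ t ∧ (u ++ [false] ∈ t ∨ u ++ [true] ∈ t)}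

lemma lcp_nil_left (v : Word) : lcp [] v = [] := by cases v <;> rfl
lemma lcp_nil_right (u : Word) : lcp u [] = [] := by cases u <;> rfl
lemma lcp_cons_same (a : Bool) (u v : Word) : lcp (a::u) (a::v) = a :: lcp u v := by simp [lcp]
lemma lcp_ft (u v : Word) : lcp (false::u) (true::v) = [] := by simp [lcp]
lemma lcp_tf (u v : Word) : lcp (true::u) (false::v) = [] := by simp [lcp]
lemma lcp_self (u : Word) : lcp u u = u := by
  induction u with
  | nil => rfl
  | cons a as ih => simp [lcp, ih]
lemma lcp_append (u v w : Word) : lcp (u++v) (u++w) = u ++ lcp v w := by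
  induction u with
  | nil => rfl
  | cons a as ih => simpa [lcp] using ih
lemma lcp_prefix_right (u z : Word) : lcp u (u++z) = u := by
  simpa [lcp_nil_left] using lcp_append u [] z
lemma lcp_prefix_left (u z : Word) : lcp (u++z) u = u := by
  simpa [lcp_nil_right] using lcp_append u z []
lemma lcp_prefix_fst (u v : Word) : lcp u v <+: u := by
  induction u generalizing v with
  | nil => simp [lcp_nil_left]
  | cons a as ih =>
    cases v with
    | nil => simp [lcp_nil_right]
    | cons b bs =>
      by_cases h : a = b
      · subst h; rw [lcp_cons_same]
        obtain ⟨z, hz⟩ := ih bs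
        exact ⟨z, by simp [hz]⟩
      · simp [lcp, h]

lemma lcp_prefix_snd (u v : Word) : lcp u v <+: v := by
  induction u generalizing v with
  | nil => simp [lcp_nil_left]
  | cons a as ih =>
    cases v with
    | nil => simp [lcp_nil_right]
    | cons b bs =>
      by_cases h : a = b
      · subst h; rw [lcp_cons_same]
        obtain ⟨z, hz⟩ := ih bs
        exact ⟨z, by simp [hz]⟩
      · simp [lcp, h]

lemma wlex_cons_iff {a : Bool} {u v : Word} : wlex (a::u) (a::v) ↔ wlex u v := List.lex_cons_iff
lemma wlex_append_iff (u : Word) {v w : Word} : wlex (u++v) (u++w) ↔ wlex v w := by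
  induction u with
  | nil => exact Iff.rfl
  | cons a as ih => simpa [wlex_cons_iff] using ih
lemma wlex_prefix (u : Word) {v : Word} (h : v ≠ []) : wlex u (u++v) := by
  induction u with
  | nil =>
    cases v with
    | nil => exact absurd rfl h
    | cons c cs => exact List.Lex.nil
  | cons a as ih => exact List.Lex.cons ih
lemma wlex_asymm {u v : Word} (h : wlex u v) (h' : wlex v u) : False :=
  (List.Lex.asymm (α := Bool) (· < ·)).asymm _ _ h h'
lemma wlex_false_true (x y : Word) : wlex (false::x) (true::y) := List.Lex.rel (by decide)

def Node (s1 s2 : Set Word) : Set Word := {[]} ∪ graft false s1 ∪ graft true s2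

lemma mem_node {s1 s2 : Set Word} {u : Word} :
    u ∈ Node s1 s2 ↔ u = [] ∨ (∃ x ∈ s1, u = false :: x) ∨ (∃ x ∈ s2, u = true :: x) := by
  simp [Node, graft, Set.mem_union, Set.mem_image, eq_comm]
  exact or_assoc

lemma tau_eq_node {r : ℕ} (h : 1 ≤ r) : tau r = Node (tau (r/2)) (tau ((r-1)/2)) := by
  rcases r with _ | _ | n
  · omega
  · show tau 1 = Node (tau 0) (tau 0)
    ext u
    simp [tau, Node, graft, Set.image_singleton]
    tauto
  · show tau (n+2) = Node (tau ((n+2)/2)) (tau ((n+1)/2))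
    rw [tau]
    rfl

lemma tau_mem_nil (r : ℕ) : ([] : Word) ∈ tau r := by
  rcases r with _ | _ | n <;> simp [tau, Node, graft]

lemma embeds_refl (t : Set Word) : Embeds t t :=
  ⟨id, fun _ hu => hu, fun _ _ _ _ h => h, fun _ _ _ _ h => h, fun _ _ _ _ => rfl⟩

lemma embeds_trans {t1 t2 t3 : Set Word} (h12 : Embeds t1 t2) (h23 : Embeds t2 t3) :
    Embeds t1 t3 := by
  obtain ⟨φ, hm, hi, hl, hc⟩ := h12
  obtain ⟨ψ, hm', hi', hl', hc'⟩ := h23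
  refine ⟨ψ ∘ φ, fun u hu => hm' _ (hm u hu), ?_, ?_, ?_⟩
  · intro u hu v hv hne
    exact hi' _ (hm u hu) _ (hm v hv) (hi u hu v hv hne)
  · intro u hu v hv h
    exact hl' _ (hm u hu) _ (hm v hv) (hl u hu v hv h)
  · intro u hu v hv
    simp only [Function.comp]
    rw [hc u hu v hv, hc' _ (hm u hu) _ (hm v hv)]

lemma embeds_tau_zero {t : Set Word} (h : ([] : Word) ∈ t) : Embeds (tau 0) t := by
  refine ⟨fun _ => [], ?_, ?_, ?_, ?_⟩
  · intro u hu; exact h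
  · intro u hu v hv hne
    simp only [tau, Set.mem_singleton_iff] at hu hv
    subst hu; subst hv; exact absurd rfl hne
  · intro u hu v hv hw
    simp only [tau, Set.mem_singleton_iff] at hu hv
    subst hu; subst hv; cases hw
  · intro u hu v hv
    simp only [tau, Set.mem_singleton_iff] at hu hv
    subst hu; subst hv; simp [lcp_nil_left]

lemma embeds_subtree {s t : Set Word} {w : Word} (h : Embeds s (subtreeAt w t)) : Embeds s t := by
  obtain ⟨φ, hm, hi, hl, hc⟩ := h
  refine ⟨fun v => w ++ φ v, fun v hv => hm v hv, ?_, ?_, ?_⟩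
  · intro a ha b hb hne heq
    exact hi a ha b hb hne (List.append_cancel_left heq)
  · intro a ha b hb h
    exact (wlex_append_iff w).2 (hl a ha b hb h)
  · intro a ha b hb
    show w ++ φ (lcp a b) = lcp (w ++ φ a) (w ++ φ b)
    rw [hc a ha b hb, lcp_append]

def nodeMap (w : Word) (φ1 φ2 : Word → Word) : Word → Word
  | [] => w
  | false :: x => w ++ false :: φ1 x
  | true :: x => w ++ true :: φ2 x

lemma embeds_node {s1 s2 t : Set Word} {w : Word} (hw : w ∈ t)
    (h1 : w ++ [false] ∈ t) (h2 : w ++ [true] ∈ t)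
    (e1 : Embeds s1 (subtreeAt (w ++ [false]) t))
    (e2 : Embeds s2 (subtreeAt (w ++ [true]) t)) :
    Embeds (Node s1 s2) t := by
  obtain ⟨φ1, hm1, hi1, hl1, hc1⟩ := e1
  obtain ⟨φ2, hm2, hi2, hl2, hc2⟩ := e2
  have hmem1 : ∀ x ∈ s1, w ++ false :: φ1 x ∈ t := by
    intro x hx
    have := hm1 x hx
    simp only [subtreeAt, Set.mem_setOf_eq, List.append_assoc] at this
    simpa using this
  have hmem2 : ∀ x ∈ s2, w ++ true :: φ2 x ∈ t := by
    intro x hx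
    have := hm2 x hx
    simp only [subtreeAt, Set.mem_setOf_eq, List.append_assoc] at this
    simpa using this
  refine ⟨nodeMap w φ1 φ2, ?_, ?_, ?_, ?_⟩
  · intro u hu
    rcases mem_node.1 hu with rfl | ⟨x, hx, rfl⟩ | ⟨x, hx, rfl⟩
    · exact hw
    · exact hmem1 x hx
    · exact hmem2 x hx
  · intro u hu v hv hne
    rcases mem_node.1 hu with rfl | ⟨x, hx, rfl⟩ | ⟨x, hx, rfl⟩ <;>
      rcases mem_node.1 hv with rfl | ⟨y, hy, rfl⟩ | ⟨y, hy, rfl⟩ <;>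
      simp only [nodeMap] <;> intro heq
    · exact hne rfl
    · have := congrArg List.length heq; simp at this
    · have := congrArg List.length heq; simp at this
    · have := congrArg List.length heq; simp at this
    · have h3 := List.append_cancel_left heq
      simp only [List.cons.injEq, true_and] at h3
      exact hi1 x hx y hy (fun e => hne (by rw [e])) h3
    · have h3 := List.append_cancel_left heq; simp at h3
    · have := congrArg List.length heq; simp at this
    · have h3 := List.append_cancel_left heq; simp at h3
    · have h3 := List.append_cancel_left heq
      simp only [List.cons.injEq, true_and] at h3
      exact hi2 x hx y hy (fun e => hne (by rw [e])) h3
  · intro u hu v hv hlex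
    rcases mem_node.1 hu with rfl | ⟨x, hx, rfl⟩ | ⟨x, hx, rfl⟩ <;>
      rcases mem_node.1 hv with rfl | ⟨y, hy, rfl⟩ | ⟨y, hy, rfl⟩ <;>
      simp only [nodeMap]
    · cases hlex
    · exact wlex_prefix w (by simp)
    · exact wlex_prefix w (by simp)
    · cases hlex
    · exact (wlex_append_iff w).2 (wlex_cons_iff.2 (hl1 x hx y hy (wlex_cons_iff.1 hlex)))
    · exact (wlex_append_iff w).2 (wlex_false_true _ _)
    · cases hlex
    · cases hlex with
      | rel hr => exact absurd hr (by decide)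
    · exact (wlex_append_iff w).2 (wlex_cons_iff.2 (hl2 x hx y hy (wlex_cons_iff.1 hlex)))
  · intro u hu v hv
    rcases mem_node.1 hu with rfl | ⟨x, hx, rfl⟩ | ⟨x, hx, rfl⟩ <;>
      rcases mem_node.1 hv with rfl | ⟨y, hy, rfl⟩ | ⟨y, hy, rfl⟩
    · simp [nodeMap, lcp_nil_left, lcp_self]
    · simp [nodeMap, lcp_nil_left, lcp_prefix_right]
    · simp [nodeMap, lcp_nil_left, lcp_prefix_right]
    · simp [nodeMap, lcp_nil_right, lcp_prefix_left]
    · rw [lcp_cons_same]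
      simp only [nodeMap]
      rw [lcp_append, lcp_cons_same, hc1 x hx y hy]
    · rw [lcp_ft]
      simp only [nodeMap]
      rw [lcp_append, lcp_ft, List.append_nil]
    · simp [nodeMap, lcp_nil_right, lcp_prefix_left]
    · rw [lcp_tf]
      simp only [nodeMap]
      rw [lcp_append, lcp_tf, List.append_nil]
    · rw [lcp_cons_same]
      simp only [nodeMap]
      rw [lcp_append, lcp_cons_same, hc2 x hx y hy]

lemma drop_w1 (w z : Word) (b : Bool) : (w ++ b :: z).drop (w.length + 1) = z := by
  have : w ++ b :: z = (w ++ [b]) ++ z := by simp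
  rw [this]
  have hl : (w ++ [b]).length = w.length + 1 := by simp
  rw [← hl, List.drop_left]

lemma embeds_node_inv {s1 s2 t : Set Word}
    (h1 : ([] : Word) ∈ s1) (h2 : ([] : Word) ∈ s2)
    (hpc : ∀ a ∈ t, ∀ v : Word, v <+: a → v ∈ t)
    (h : Embeds (Node s1 s2) t) :
    ∃ w, w ++ [false] ∈ t ∧ w ++ [true] ∈ t ∧
      Embeds s1 (subtreeAt (w ++ [false]) t) ∧ Embeds s2 (subtreeAt (w ++ [true]) t) := by
  obtain ⟨φ, hm, hi, hl, hc⟩ := h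
  have hnilN : ([] : Word) ∈ Node s1 s2 := mem_node.2 (Or.inl rfl)
  have hfN : ∀ x ∈ s1, false :: x ∈ Node s1 s2 :=
    fun x hx => mem_node.2 (Or.inr (Or.inl ⟨x, hx, rfl⟩))
  have htN : ∀ x ∈ s2, true :: x ∈ Node s1 s2 :=
    fun x hx => mem_node.2 (Or.inr (Or.inr ⟨x, hx, rfl⟩))
  set w := φ [] with hwdef
  have key : ∀ x ∈ s1, ∀ y ∈ s2, w = lcp (φ (false :: x)) (φ (true :: y)) := by
    intro x hx y hy
    have := hc (false :: x) (hfN x hx) (true :: y) (htN y hy)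
    rwa [lcp_ft] at this
  have pre1 : ∀ x ∈ s1, ∃ z, φ (false :: x) = w ++ z ∧ z ≠ [] := by
    intro x hx
    have hk := key x hx [] h2
    have hpre : w <+: φ (false :: x) := by rw [hk]; exact lcp_prefix_fst _ _
    obtain ⟨z, hz⟩ := hpre
    refine ⟨z, hz.symm, ?_⟩
    rintro rfl
    exact hi [] hnilN (false :: x) (hfN x hx) (by simp) (by simp [← hwdef, ← hz])
  have pre2 : ∀ y ∈ s2, ∃ z, φ (true :: y) = w ++ z ∧ z ≠ [] := by
    intro y hy
    have hk := key [] h1 y hy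
    have hpre : w <+: φ (true :: y) := by rw [hk]; exact lcp_prefix_snd _ _
    obtain ⟨z, hz⟩ := hpre
    refine ⟨z, hz.symm, ?_⟩
    rintro rfl
    exact hi [] hnilN (true :: y) (htN y hy) (by simp) (by simp [← hwdef, ← hz])
  obtain ⟨p, hp, hpne⟩ := pre1 [] h1
  obtain ⟨q, hq, hqne⟩ := pre2 [] h2
  -- determine first letters of p and q
  obtain ⟨c, p', rfl⟩ : ∃ c p', p = c :: p' := by
    cases p with
    | nil => exact absurd rfl hpne
    | cons c p' => exact ⟨c, p', rfl⟩
  obtain ⟨c', q', rfl⟩ : ∃ c' q', q = c' :: q' := by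
    cases q with
    | nil => exact absurd rfl hqne
    | cons c' q' => exact ⟨c', q', rfl⟩
  have hkey0 := key [] h1 [] h2
  have hlcp0 : lcp (c :: p') (c' :: q') = [] := by
    rw [hp, hq, lcp_append] at hkey0
    have := congrArg List.length hkey0
    simp at this
    exact this
  have hcc' : c ≠ c' := by
    intro he
    rw [he, lcp_cons_same] at hlcp0
    simp at hlcp0
  have horder := hl [false] (hfN [] h1) [true] (htN [] h2) (wlex_false_true [] [])
  rw [hp, hq] at horder
  have horder' := (wlex_append_iff w).1 horder
  have hcf : c = false ∧ c' = true := by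
    cases horder' with
    | rel hr => revert hr hcc'; cases c <;> cases c' <;> decide
    | cons _ => exact absurd rfl hcc'
  obtain ⟨rfl, rfl⟩ := hcf
  -- general first-letter claims
  have gen1 : ∀ x ∈ s1, φ (false :: x) = (w ++ [false]) ++ (φ (false :: x)).drop (w.length + 1) := by
    intro x hx
    obtain ⟨z, hz, hzne⟩ := pre1 x hx
    obtain ⟨d, z', rfl⟩ : ∃ d z', z = d :: z' := by
      cases z with
      | nil => exact absurd rfl hzne
      | cons d z' => exact ⟨d, z', rfl⟩
    have hk := key x hx [] h2
    rw [hz, hq, lcp_append] at hk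
    have hk' : lcp (d :: z') (true :: q') = [] := by
      have := congrArg List.length hk
      simp at this
      exact this
    cases d
    · rw [hz, drop_w1]; simp
    · rw [lcp_cons_same] at hk'; simp at hk'
  have gen2 : ∀ y ∈ s2, φ (true :: y) = (w ++ [true]) ++ (φ (true :: y)).drop (w.length + 1) := by
    intro y hy
    obtain ⟨z, hz, hzne⟩ := pre2 y hy
    obtain ⟨d, z', rfl⟩ : ∃ d z', z = d :: z' := by
      cases z with
      | nil => exact absurd rfl hzne
      | cons d z' => exact ⟨d, z', rfl⟩
    have hk := key [] h1 y hy
    rw [hz, hp, lcp_append] at hk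
    have hk' : lcp (false :: p') (d :: z') = [] := by
      have := congrArg List.length hk
      simp at this
      exact this
    cases d
    · rw [lcp_cons_same] at hk'; simp at hk'
    · rw [hz, drop_w1]; simp
  refine ⟨w, ?_, ?_, ?_, ?_⟩
  · exact hpc _ (hm [false] (hfN [] h1)) _ (by rw [hp]; exact ⟨p', by simp⟩)
  · exact hpc _ (hm [true] (htN [] h2)) _ (by rw [hq]; exact ⟨q', by simp⟩)
  · refine ⟨fun x => (φ (false :: x)).drop (w.length + 1), ?_, ?_, ?_, ?_⟩
    · intro x hx
      show (w ++ [false]) ++ (φ (false :: x)).drop (w.length + 1) ∈ t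
      rw [← gen1 x hx]
      exact hm _ (hfN x hx)
    · intro x hx y hy hne heq
      dsimp only at heq
      refine hi (false :: x) (hfN x hx) (false :: y) (hfN y hy) (by simpa using hne) ?_
      rw [gen1 x hx, gen1 y hy, heq]
    · intro x hx y hy hxy
      have := hl _ (hfN x hx) _ (hfN y hy) (wlex_cons_iff.2 hxy)
      rw [gen1 x hx, gen1 y hy] at this
      exact (wlex_append_iff _).1 this
    · intro x hx y hy
      have hc' := hc _ (hfN x hx) _ (hfN y hy)
      rw [lcp_cons_same, gen1 x hx, gen1 y hy, lcp_append] at hc'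
      show (φ (false :: lcp x y)).drop (w.length + 1) = _
      rw [hc']
      have : (w ++ [false]).length = w.length + 1 := by simp
      rw [← this, List.drop_left]
  · refine ⟨fun y => (φ (true :: y)).drop (w.length + 1), ?_, ?_, ?_, ?_⟩
    · intro x hx
      show (w ++ [true]) ++ (φ (true :: x)).drop (w.length + 1) ∈ t
      rw [← gen2 x hx]
      exact hm _ (htN x hx)
    · intro x hx y hy hne heq
      dsimp only at heq
      refine hi (true :: x) (htN x hx) (true :: y) (htN y hy) (by simpa using hne) ?_
      rw [gen2 x hx, gen2 y hy, heq]
    · intro x hx y hy hxy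
      have := hl _ (htN x hx) _ (htN y hy) (wlex_cons_iff.2 hxy)
      rw [gen2 x hx, gen2 y hy] at this
      exact (wlex_append_iff _).1 this
    · intro x hx y hy
      have hc' := hc _ (htN x hx) _ (htN y hy)
      rw [lcp_cons_same, gen2 x hx, gen2 y hy, lcp_append] at hc'
      show (φ (true :: lcp x y)).drop (w.length + 1) = _
      rw [hc']
      have : (w ++ [true]).length = w.length + 1 := by simp
      rw [← this, List.drop_left]

lemma subtreeAt_subtreeAt (u v : Word) (t : Set Word) :
    subtreeAt v (subtreeAt u t) = subtreeAt (u ++ v) t := by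
  ext x; simp [subtreeAt, List.append_assoc]

lemma subtreeAt_false_node (A B : Set Word) : subtreeAt [false] (Node A B) = A := by
  ext x
  simp only [subtreeAt, Set.mem_setOf_eq, List.singleton_append, mem_node]
  constructor
  · rintro (h | ⟨y, hy, h⟩ | ⟨y, hy, h⟩)
    · simp at h
    · simp only [List.cons.injEq, true_and] at h; rwa [h]
    · simp at h
  · intro hx; exact Or.inr (Or.inl ⟨x, hx, rfl⟩)

lemma subtreeAt_true_node (A B : Set Word) : subtreeAt [true] (Node A B) = B := by
  ext x
  simp only [subtreeAt, Set.mem_setOf_eq, List.singleton_append, mem_node]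
  constructor
  · rintro (h | ⟨y, hy, h⟩ | ⟨y, hy, h⟩)
    · simp at h
    · simp at h
    · simp only [List.cons.injEq, true_and] at h; rwa [h]
  · intro hx; exact Or.inr (Or.inr ⟨x, hx, rfl⟩)

lemma embeds_tau_mono : ∀ n, ∀ m ≤ n, Embeds (tau m) (tau n) := by
  intro n
  induction n using Nat.strong_induction_on with
  | _ n ih =>
    intro m hmn
    rcases Nat.eq_zero_or_pos m with rfl | hm
    · exact embeds_tau_zero (tau_mem_nil n)
    · have hn : 1 ≤ n := le_trans hm hmn
      rw [tau_eq_node hm, tau_eq_node hn]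
      have hf : ([] : Word) ++ [false] ∈ Node (tau (n/2)) (tau ((n-1)/2)) := by
        simp only [List.nil_append]
        exact mem_node.2 (Or.inr (Or.inl ⟨[], tau_mem_nil _, rfl⟩))
      have htt : ([] : Word) ++ [true] ∈ Node (tau (n/2)) (tau ((n-1)/2)) := by
        simp only [List.nil_append]
        exact mem_node.2 (Or.inr (Or.inr ⟨[], tau_mem_nil _, rfl⟩))
      have e1 : Embeds (tau (m/2)) (subtreeAt (([] : Word) ++ [false]) (Node (tau (n/2)) (tau ((n-1)/2)))) := by
        simp only [List.nil_append, subtreeAt_false_node]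
        exact ih (n/2) (by omega) (m/2) (by omega)
      have e2 : Embeds (tau ((m-1)/2)) (subtreeAt (([] : Word) ++ [true]) (Node (tau (n/2)) (tau ((n-1)/2)))) := by
        simp only [List.nil_append, subtreeAt_true_node]
        exact ih ((n-1)/2) (by omega) ((m-1)/2) (by omega)
      exact embeds_node (mem_node.2 (Or.inl rfl)) hf htt e1 e2

lemma tau_finite : ∀ r, (tau r).Finite := by
  intro r
  induction r using Nat.strong_induction_on with
  | _ r ih =>
    rcases r with _ | _ | n
    · rw [tau]; exact Set.finite_singleton _
    · rw [tau]
      exact (Set.finite_singleton _).insert _ |>.insert _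
    · rw [tau]
      exact ((Set.finite_singleton _).union ((ih _ (by omega)).image _)).union
        ((ih _ (by omega)).image _)

lemma graft_ncard (b : Bool) (A : Set Word) : (graft b A).ncard = A.ncard :=
  Set.ncard_image_of_injective _ (fun x y h => by simpa using h)

lemma node_ncard {A B : Set Word} (hA : A.Finite) (hB : B.Finite) :
    (Node A B).ncard = 1 + A.ncard + B.ncard := by
  have d1 : Disjoint ({([] : Word)} ∪ graft false A) (graft true B) := by
    rw [Set.disjoint_left]
    rintro x (hx | ⟨y, hy, rfl⟩) ⟨z, hz, hzz⟩
    · simp only [Set.mem_singleton_iff] at hx; subst hx; simp at hzz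
    · simp at hzz
  have d2 : Disjoint ({([] : Word)} : Set Word) (graft false A) := by
    rw [Set.disjoint_left]
    rintro x hx ⟨z, hz, hzz⟩
    simp only [Set.mem_singleton_iff] at hx; subst hx; simp at hzz
  rw [Node, Set.ncard_union_eq d1 ((Set.finite_singleton _).union (hA.image _)) (hB.image _),
    Set.ncard_union_eq d2 (Set.finite_singleton _) (hA.image _),
    Set.ncard_singleton, graft_ncard, graft_ncard]

lemma tau_ncard : ∀ r, r + 1 ≤ (tau r).ncard := by
  intro r
  induction r using Nat.strong_induction_on with
  | _ r ih =>
    rcases Nat.eq_zero_or_pos r with rfl | hr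
    · simp [tau]
    · rw [tau_eq_node hr, node_ncard (tau_finite _) (tau_finite _)]
      have h1 := ih (r/2) (by omega)
      have h2 := ih ((r-1)/2) (by omega)
      omega


lemma embeds_le_ncard {r : ℕ} {t : Set Word} (ht : t.Finite) (h : Embeds (tau r) t) :
    r < t.ncard := by
  obtain ⟨φ, hm, hi, _, _⟩ := h
  have h1 : r + 1 ≤ (tau r).ncard := tau_ncard r
  have h2 : (tau r).ncard = (φ '' tau r).ncard := by
    rw [Set.ncard_image_of_injOn]
    intro x hx y hy hxy
    by_contra hne
    exact hi x hx y hy hne hxy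
  have h3 : (φ '' tau r).ncard ≤ t.ncard := by
    apply Set.ncard_le_ncard _ ht
    rintro _ ⟨x, hx, rfl⟩
    exact hm x hx
  omega

lemma rhs_bddAbove {t : Set Word} (ht : t.Finite) : BddAbove {r | Embeds (tau r) t} :=
  ⟨t.ncard, fun r hr => le_of_lt (embeds_le_ncard ht hr)⟩

lemma rhs_le {t : Set Word} {r : ℕ} (ht : t.Finite) (h : Embeds (tau r) t) : r ≤ RHS t :=
  le_csSup (rhs_bddAbove ht) h

lemma rhs_spec {t : Set Word} (ht : t.Finite) (h0 : ([] : Word) ∈ t) :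
    Embeds (tau (RHS t)) t :=
  Nat.sSup_mem ⟨0, embeds_tau_zero h0⟩ (rhs_bddAbove ht)

lemma subtree_finite {t : Set Word} (ht : t.Finite) (u : Word) : (subtreeAt u t).Finite :=
  Set.Finite.preimage (fun a _ b _ h => List.append_cancel_left h) ht

lemma sv_le_rhs {t : Set Word} {w : Word} (ht : t.Finite) (hw : w ∈ t) : Sv w t ≤ RHS t := by
  have h0 : ([] : Word) ∈ subtreeAt w t := by simpa [subtreeAt] using hw
  exact rhs_le ht (embeds_subtree (rhs_spec (subtree_finite ht w) h0))

lemma subtree_pc {t : Set Word} (hpc : ∀ a ∈ t, ∀ v : Word, v <+: a → v ∈ t) (u : Word) :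
    ∀ a ∈ subtreeAt u t, ∀ v : Word, v <+: a → v ∈ subtreeAt u t := by
  intro a ha v hv
  obtain ⟨z, rfl⟩ := hv
  exact hpc _ ha _ ⟨z, by simp⟩

theorem rhs_at_lexmax_vertex' (t : Set Word) (u : Word)
    (hfin : t.Finite) (hnil : ([] : Word) ∈ t)
    (hpc : ∀ a ∈ t, ∀ v : Word, v <+: a → v ∈ t)
    (hfull : ∀ a ∈ t, (a ++ [false] ∈ t ↔ a ++ [true] ∈ t))
    (hne : t ≠ {([] : Word)})
    (hu : u ∈ t) (humax : Sv u t = RHS t)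
    (hlexmax : ∀ w ∈ t, Sv w t = RHS t → w = u ∨ wlex w u) :
    u ++ [false] ∈ t ∧ u ++ [true] ∈ t ∧
    RHS t = 2 * min (Sv (u ++ [false]) t) (Sv (u ++ [true]) t) +
      (if Sv (u ++ [true]) t < Sv (u ++ [false]) t then 1 else 0) + 1 ∧
    (RHS t % 2 = 0 ↔ Sv (u ++ [true]) t < Sv (u ++ [false]) t) := by
  have hroot : [false] ∈ t ∧ [true] ∈ t := by
    have hex : ∃ x ∈ t, x ≠ [] := by
      by_contra hno
      push_neg at hno
      apply hne
      ext x
      simp only [Set.mem_singleton_iff]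
      exact ⟨fun hx => hno x hx, fun hx => hx ▸ hnil⟩
    obtain ⟨x, hx, hxne⟩ := hex
    obtain ⟨c, xs, rfl⟩ : ∃ c xs, x = c :: xs := by
      cases x with
      | nil => exact absurd rfl hxne
      | cons c xs => exact ⟨c, xs, rfl⟩
    have hc : [c] ∈ t := hpc _ hx _ ⟨xs, rfl⟩
    have hff := hfull [] hnil
    simp only [List.nil_append] at hff
    cases c
    · exact ⟨hc, hff.1 hc⟩
    · exact ⟨hff.2 hc, hc⟩
  have hs1 : 1 ≤ RHS t := by
    apply rhs_le hfin
    rw [tau_eq_node (le_refl 1)]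
    apply embeds_node (w := ([] : Word)) hnil
      (by simpa using hroot.1) (by simpa using hroot.2)
    · exact embeds_tau_zero (by simp [subtreeAt, hroot.1])
    · exact embeds_tau_zero (by simp [subtreeAt, hroot.2])
  have hufin := subtree_finite hfin u
  have hunil : ([] : Word) ∈ subtreeAt u t := by simpa [subtreeAt] using hu
  have hemb : Embeds (tau (RHS t)) (subtreeAt u t) := by
    have : RHS (subtreeAt u t) = RHS t := humax
    rw [← this]
    exact rhs_spec hufin hunil
  rw [tau_eq_node hs1] at hemb
  obtain ⟨w, hwf, hwt, e1, e2⟩ :=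
    embeds_node_inv (tau_mem_nil _) (tau_mem_nil _) (subtree_pc hpc u) hemb
  have hw_nil : w = [] := by
    by_contra hwne
    have hwmem : w ∈ subtreeAt u t := subtree_pc hpc u _ hwf _ ⟨[false], rfl⟩
    have huw : u ++ w ∈ t := hwmem
    have hge : RHS t ≤ Sv (u ++ w) t := by
      apply rhs_le (subtree_finite hfin _)
      rw [tau_eq_node hs1]
      apply embeds_node (w := ([] : Word))
      · simpa [subtreeAt] using huw
      · simpa [subtreeAt, List.append_assoc] using hwf
      · simpa [subtreeAt, List.append_assoc] using hwt
      · rw [subtreeAt_subtreeAt, List.nil_append, List.append_assoc]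
        rwa [subtreeAt_subtreeAt] at e1
      · rw [subtreeAt_subtreeAt, List.nil_append, List.append_assoc]
        rwa [subtreeAt_subtreeAt] at e2
    have heq : Sv (u ++ w) t = RHS t := le_antisymm (sv_le_rhs hfin huw) hge
    rcases hlexmax _ huw heq with h | h
    · exact hwne (List.append_cancel_left (h.trans (List.append_nil u).symm))
    · exact wlex_asymm h (wlex_prefix u hwne)
  subst hw_nil
  have h1f : u ++ [false] ∈ t := hwf
  have h1t : u ++ [true] ∈ t := hwt
  rw [List.nil_append, subtreeAt_subtreeAt] at e1 e2
  set a := Sv (u ++ [false]) t with hadef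
  set b := Sv (u ++ [true]) t with hbdef
  have ha_ge : RHS t / 2 ≤ a := rhs_le (subtree_finite hfin _) e1
  have hb_ge : (RHS t - 1) / 2 ≤ b := rhs_le (subtree_finite hfin _) e2
  have ha_lt : a < RHS t := by
    rcases lt_or_eq_of_le (sv_le_rhs hfin h1f) with h | h
    · exact h
    · rcases hlexmax _ h1f h with h' | h'
      · have := congrArg List.length h'
        simp at this
      · exact absurd (wlex_asymm h' (wlex_prefix u (by simp))) (fun x => x)
  have hb_lt : b < RHS t := by
    rcases lt_or_eq_of_le (sv_le_rhs hfin h1t) with h | h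
    · exact h
    · rcases hlexmax _ h1t h with h' | h'
      · have := congrArg List.length h'
        simp at this
      · exact absurd (wlex_asymm h' (wlex_prefix u (by simp))) (fun x => x)
  have hlow : 2 * min a b + (if b < a then 1 else 0) + 1 ≤ RHS t := by
    apply rhs_le hfin
    rw [tau_eq_node (by omega : 1 ≤ 2 * min a b + (if b < a then 1 else 0) + 1)]
    apply embeds_node (w := u) hu h1f h1t
    · refine embeds_trans (embeds_tau_mono a _ ?_) (rhs_spec (subtree_finite hfin _) ?_)
      · rcases lt_or_ge b a with h | h
        · rw [if_pos h]; omega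
        · rw [if_neg (not_lt.2 h)]; omega
      · simpa [subtreeAt] using h1f
    · refine embeds_trans (embeds_tau_mono b _ ?_) (rhs_spec (subtree_finite hfin _) ?_)
      · rcases lt_or_ge b a with h | h
        · rw [if_pos h]; omega
        · rw [if_neg (not_lt.2 h)]; omega
      · simpa [subtreeAt] using h1t
  refine ⟨h1f, h1t, ?_, ?_⟩
  · rcases lt_or_ge b a with h | h
    · rw [if_pos h] at hlow ⊢; omega
    · rw [if_neg (not_lt.2 h)] at hlow ⊢; omega
  · rcases lt_or_ge b a with h | h
    · rw [if_pos h] at hlow; constructor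
      · intro _; exact h
      · intro _; omega
    · rw [if_neg (not_lt.2 h)] at hlow; constructor
      · intro h2; omega
      · intro h2; omega

/-- Let `t ≠ {∅}` be a full binary tree and let `u` be the lexicographically maximal vertex with
`S_u(t) = S(t)`. Then `u` is internal (`u1, u2 ∈ t`),
`S(t) = 2·min(S_{u1}(t), S_{u2}(t)) + 1[S_{u1}(t) > S_{u2}(t)] + 1`, and `S(t)` is even iff
`S_{u1}(t) > S_{u2}(t)`. -/
theorem rhs_at_lexmax_vertex (t : Set Word) (u : Word)
    (ht : IsFullBinaryTree t) (hne : t ≠ {([] : Word)})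
    (hu : u ∈ t) (humax : Sv u t = RHS t)
    (hlexmax : ∀ w ∈ t, Sv w t = RHS t → w = u ∨ wlex w u) :
    u ++ [false] ∈ t ∧ u ++ [true] ∈ t ∧
    RHS t = 2 * min (Sv (u ++ [false]) t) (Sv (u ++ [true]) t) +
      (if Sv (u ++ [true]) t < Sv (u ++ [false]) t then 1 else 0) + 1 ∧
    (RHS t % 2 = 0 ↔ Sv (u ++ [true]) t < Sv (u ++ [false]) t) := by
  obtain ⟨⟨hfin, hnil, hpc⟩, hfull⟩ := ht
  exact rhs_at_lexmax_vertex' t u hfin hnil hpc hfull hne hu humax hlexmax
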